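/- Let G = ⊕_{n≥1} C_n be the direct sum of the cyclic groups C_n = ℤ/nℤ, endowed with the semigroup topology whose neighborhood base at 0 consists of the sets O_f = {0} ∪ {x ∈ G : ∃ n, 0 < x(n) < f(n) and x(m) = 0 for all m > n}, where f ranges over non-decreasing unbounded functions ω\{0} → ω. Then the set S = {0} ∪ {-δ_m : m ≥ 2}, where δ_m is the element with 1 in coordinate m and 0 elsewhere, is a closed discrete subset of G which generates G. -/

import Mathlib

/-- The direct sum `⊕_{n ≥ 1} ℤ/nℤ`. -/
abbrev Gds : Type := Π₀ n : ℕ+, ZMod n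

/-- The basic neighborhood of `0` associated with `f`. -/
def Of (f : ℕ+ → ℕ) : Set Gds :=
  {0} ∪ {x : Gds | ∃ n : ℕ+, 0 < (x n).val ∧ (x n).val < f n ∧ ∀ m : ℕ+, n < m → x m = 0}

/-- The set `S = {0} ∪ {-δ_m : m ≥ 2}`. -/
def Sds : Set Gds :=
  {0} ∪ {x : Gds | ∃ m : ℕ+, 2 ≤ m ∧ x = -(DFinsupp.single m (1 : ZMod m))}

lemma fK_mono (K : ℕ) : Monotone (fun n : ℕ+ => (n : ℕ) - K) :=
  fun a b h => Nat.sub_le_sub_right h K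

lemma fK_unbdd (K : ℕ) : ∀ k : ℕ, ∃ n : ℕ+, k < (n : ℕ) - K := by
  intro k
  refine ⟨⟨K + k + 1, by positivity⟩, ?_⟩
  show k < K + k + 1 - K
  omega

lemma master (x : Gds) (K : ℕ) (hK : 1 ≤ K) (hx : ∀ m : ℕ+, K < (m : ℕ) → x m = 0)
    (y : Gds) (hy : y ∈ Of (fun n : ℕ+ => (n : ℕ) - K)) (hy0 : y ≠ 0) :
    x + y ∉ Sds := by
  rcases hy with h | ⟨n, h1, h2, h3⟩
  · exact absurd h hy0
  haveI : NeZero ((n : ℕ)) := ⟨n.ne_zero⟩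
  replace h2 : (y n).val < (n : ℕ) - K := h2
  have hxn : x n = 0 := hx n (by omega)
  have hyn : y n ≠ 0 := ZMod.val_pos.mp h1
  have hsum : (x + y) n = y n := by simp [hxn]
  rintro (h | ⟨m, hm, hS⟩)
  · have : (x + y) n = 0 := by rw [Set.mem_singleton_iff.mp h]; simp
    rw [hsum] at this; exact hyn this
  · have hnm : n = m := by
      by_contra hne
      have : (-(DFinsupp.single m (1 : ZMod m)) : Gds) n = 0 := by
        have h0 := DFinsupp.single_eq_of_ne (β := fun n : ℕ+ => ZMod n)
          (b := (1 : ZMod m)) hne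
        rw [DFinsupp.neg_apply, h0, neg_zero]
      rw [← hS, hsum] at this
      exact hyn this
    subst hnm
    have hval : (y n).val = (n : ℕ) - 1 := by
      have hyneg : y n = -1 := by
        have := congrArg (fun z : Gds => z n) hS
        simp only [hsum] at this
        simpa using this
      haveI : Fact (1 < (n : ℕ)) := ⟨by omega⟩
      rw [hyneg, ZMod.neg_val, if_neg one_ne_zero, ZMod.val_one]
    omega

theorem stmt16 (τ : TopologicalSpace Gds)
    -- the topology has, at each point `x`, the neighborhood base `{x + O_f}` where `f`
    -- ranges over non-decreasing unbounded functions (translation-invariant semigroup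
    -- topology with neighborhood base `{O_f}` at `0`):
    (hτ : ∀ x : Gds, (@nhds Gds τ x).HasBasis
      (fun f : ℕ+ → ℕ => Monotone f ∧ ∀ k : ℕ, ∃ n : ℕ+, k < f n)
      (fun f => (x + ·) '' Of f)) :
    @IsClosed Gds τ Sds ∧
    @DiscreteTopology Sds (@instTopologicalSpaceSubtype Gds (· ∈ Sds) τ) ∧
    AddSubgroup.closure Sds = ⊤ := by
  letI : TopologicalSpace Gds := τ
  classical
  refine ⟨?_, ?_, ?_⟩
  · -- closed
    rw [← isOpen_compl_iff, isOpen_iff_mem_nhds]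
    intro x hxS
    rw [(hτ x).mem_iff]
    set K : ℕ := max 1 (x.support.sup (fun n => (n : ℕ))) with hKdef
    have hx : ∀ m : ℕ+, K < (m : ℕ) → x m = 0 := by
      intro m hm
      by_contra h0
      have : m ∈ x.support := DFinsupp.mem_support_iff.mpr h0
      have : (m : ℕ) ≤ K := le_trans (Finset.le_sup (f := fun n : ℕ+ => (n : ℕ)) this)
        (le_max_right _ _)
      omega
    refine ⟨fun n => (n : ℕ) - K, ⟨fK_mono K, fK_unbdd K⟩, ?_⟩
    rintro _ ⟨y, hy, rfl⟩
    by_cases hy0 : y = 0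
    · subst hy0; simpa using hxS
    · exact master x K (le_max_left _ _) hx y hy hy0
  · -- discrete
    rw [discreteTopology_subtype_iff]
    intro x hxS
    rw [nhdsWithin, inf_assoc, Filter.inf_principal, Filter.inf_principal_eq_bot, (hτ x).mem_iff]
    obtain ⟨K, hK, hx⟩ : ∃ K : ℕ, 1 ≤ K ∧ ∀ m : ℕ+, K < (m : ℕ) → x m = 0 := by
      rcases hxS with h | ⟨m, hm, rfl⟩
      · exact ⟨1, le_refl 1, fun k _ => by rw [Set.mem_singleton_iff.mp h]; simp⟩
      · refine ⟨(m : ℕ), m.property, fun k hk => ?_⟩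
        have hne : m ≠ k := fun h => absurd hk (by rw [h]; exact lt_irrefl _)
        have h0 := DFinsupp.single_eq_of_ne (β := fun n : ℕ+ => ZMod n)
          (b := (1 : ZMod m)) (Ne.symm hne)
        rw [DFinsupp.neg_apply, h0, neg_zero]
    refine ⟨fun n => (n : ℕ) - K, ⟨fK_mono K, fK_unbdd K⟩, ?_⟩
    rintro _ ⟨y, hy, rfl⟩
    by_cases hy0 : y = 0
    · subst hy0
      intro hmem
      exact hmem.1 (by simp)
    · intro hmem
      exact master x K hK hx y hy hy0 hmem.2
  · -- generates
    rw [eq_top_iff]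
    intro x _
    induction x using DFinsupp.induction with
    | h0 => exact AddSubgroup.subset_closure (Or.inl rfl)
    | ha i b f hf hb ih =>
      refine AddSubgroup.add_mem _ ?_ (ih trivial)
      by_cases hi : (i : ℕ) = 1
      · haveI : Subsingleton (ZMod (i : ℕ)) := by rw [hi]; infer_instance
        have hb0 : b = 0 := Subsingleton.elim b 0
        rw [hb0, DFinsupp.single_zero]
        exact AddSubgroup.zero_mem _
      · haveI : NeZero ((i : ℕ)) := ⟨i.ne_zero⟩
        have h2 : 2 ≤ i := by
          have hp : 1 ≤ (i : ℕ) := i.property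
          have hi' : (i : ℕ) ≠ 1 := hi
          exact_mod_cast (by omega : 2 ≤ (i : ℕ))
        have h1 : -(DFinsupp.single i (1 : ZMod i) : Gds) ∈ AddSubgroup.closure Sds :=
          AddSubgroup.subset_closure (Or.inr ⟨i, h2, rfl⟩)
        have h1' : (DFinsupp.single i (1 : ZMod i) : Gds) ∈ AddSubgroup.closure Sds := by
          have := AddSubgroup.neg_mem _ h1
          rwa [neg_neg] at this
        have key : (DFinsupp.single i b : Gds)
            = b.val • (DFinsupp.single i (1 : ZMod i) : Gds) := by
          have hmap := AddMonoidHom.map_nsmul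
            (DFinsupp.singleAddHom (fun n : ℕ+ => ZMod n) i) b.val (1 : ZMod i)
          simp only [DFinsupp.singleAddHom_apply] at hmap
          have hb1 : b.val • (1 : ZMod i) = b := by
            rw [nsmul_eq_mul, mul_one]
            exact ZMod.natCast_rightInverse b
          rw [← hmap, hb1]
        rw [key]
        exact AddSubgroup.nsmul_mem _ h1' _
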